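/- arXiv:2410.10439 — 6 statements merged into one kernel-verified Lean document; each statement's English description precedes it below -/
import Mathlib

section
/- If Z is a DD-bisimulation between models M and M' with (w,w') ∈ Z, then for every ML(DD)-formula φ: M,w ⊨ φ if and only if M',w' ⊨ φ. -/
/-- ML(DD)-formulas over propositional variables indexed by ℕ. -/
inductive MLDD : Type
  | prop : ℕ → MLDD
  | neg : MLDD → MLDD
  | or : MLDD → MLDD → MLDD
  | dia : MLDD → MLDD
  | dd : MLDD → MLDD → MLDD

/-- A Kripke model: a nonempty set of worlds, an accessibility relation, a valuation. -/
structure Model where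
  W : Type
  ne : Nonempty W
  R : W → W → Prop
  V : ℕ → W → Prop

/-- Satisfaction relation for ML(DD). -/
def sat (M : Model) : M.W → MLDD → Prop
  | w, .prop p => M.V p w
  | w, .neg φ => ¬ sat M w φ
  | w, .or φ ψ => sat M w φ ∨ sat M w ψ
  | w, .dia φ => ∃ v, M.R w v ∧ sat M v φ
  | _, .dd φ ψ => ∃ v, sat M v φ ∧ sat M v ψ ∧ ∀ v', v' ≠ v → ¬ sat M v' φ

/-- A DD-bisimulation between models `M` and `M'`. -/
def IsDDBisim (M M' : Model) (Z : M.W → M'.W → Prop) : Prop :=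
  (∀ w, ∃ w', Z w w') ∧                          -- serial
  (∀ w', ∃ w, Z w w') ∧                          -- surjective
  (∀ w w', Z w w' →
    ((∀ p, M.V p w ↔ M'.V p w') ∧                                  -- Atom
     (∀ v, M.R w v → ∃ v', Z v v' ∧ M'.R w' v') ∧                   -- Zig
     (∀ v', M'.R w' v' → ∃ v, Z v v' ∧ M.R w v) ∧                   -- Zag
     (({x' | Z w x'} = {w'}) ↔ ({x | Z x w'} = {w}))))              -- Singular

/-- If `Z` is a DD-bisimulation between `M` and `M'` with `(w,w') ∈ Z`, then `w` and `w'`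
satisfy exactly the same ML(DD)-formulas. -/
theorem dd_bisim_invariance (M M' : Model) (Z : M.W → M'.W → Prop)
    (hZ : IsDDBisim M M' Z) (w : M.W) (w' : M'.W) (hww' : Z w w') :
    ∀ φ : MLDD, sat M w φ ↔ sat M' w' φ := by
  obtain ⟨hser, hsurj, hloc⟩ := hZ
  intro φ
  induction φ generalizing w w' with
  | prop p =>
    exact (hloc w w' hww').1 p
  | neg φ ih =>
    simp only [sat]
    exact not_congr (ih w w' hww')
  | or φ ψ ihφ ihψ =>
    simp only [sat]
    exact or_congr (ihφ w w' hww') (ihψ w w' hww')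
  | dia φ ih =>
    simp only [sat]
    constructor
    · rintro ⟨v, hwv, hv⟩
      obtain ⟨v', hvv', hw'v'⟩ := (hloc w w' hww').2.1 v hwv
      exact ⟨v', hw'v', (ih v v' hvv').mp hv⟩
    · rintro ⟨v', hw'v', hv'⟩
      obtain ⟨v, hvv', hwv⟩ := (hloc w w' hww').2.2.1 v' hw'v'
      exact ⟨v, hwv, (ih v v' hvv').mpr hv'⟩
  | dd φ ψ ihφ ihψ =>
    simp only [sat]
    constructor
    · rintro ⟨v, hφ, hψ, huniq⟩
      obtain ⟨v', hvv'⟩ := hser v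
      refine ⟨v', (ihφ v v' hvv').mp hφ, (ihψ v v' hvv').mp hψ, ?_⟩
      intro u' hne hsatu'
      -- every Z-preimage of v' is v
      have hinv : {x | Z x v'} = {v} := by
        ext x
        simp only [Set.mem_setOf_eq, Set.mem_singleton_iff]
        constructor
        · intro hx
          by_contra hxv
          exact huniq x hxv ((ihφ x v' hx).mpr ((ihφ v v' hvv').mp hφ))
        · intro hx; subst hx; exact hvv'
      have himg : {x' | Z v x'} = {v'} := ((hloc v v' hvv').2.2.2).mpr hinv
      obtain ⟨u, huu'⟩ := hsurj u'
      have hu : u = v := by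
        by_contra h
        exact huniq u h ((ihφ u u' huu').mpr hsatu')
      subst hu
      have : u' ∈ ({x' | Z u x'} : Set M'.W) := huu'
      rw [himg] at this
      exact hne this
    · rintro ⟨v', hφ, hψ, huniq⟩
      obtain ⟨v, hvv'⟩ := hsurj v'
      refine ⟨v, (ihφ v v' hvv').mpr hφ, (ihψ v v' hvv').mpr hψ, ?_⟩
      intro u hne hsatu
      have himg : {x' | Z v x'} = {v'} := by
        ext x'
        simp only [Set.mem_setOf_eq, Set.mem_singleton_iff]
        constructor
        · intro hx
          by_contra hxv
          exact huniq x' hxv ((ihφ v x' hx).mp ((ihφ v v' hvv').mpr hφ))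
        · intro hx; subst hx; exact hvv'
      have hinv : {x | Z x v'} = {v} := ((hloc v v' hvv').2.2.2).mp himg
      obtain ⟨u', huu'⟩ := hser u
      have hu' : u' = v' := by
        by_contra h
        exact huniq u' h ((ihφ u u' huu').mp hsatu)
      subst hu'
      have : u ∈ ({x | Z x u'} : Set M.W) := huu'
      rw [hinv] at this
      exact hne this
end

section
/- For every ML(DD)-formula φ there exists an MLC-formula φ' such that for every model M and every world w of M: M,w ⊨ φ if and only if M,w ⊨ φ'. In particular, @_φψ is equivalent to ∃_{=1}φ ∧ ∃_{=1}(φ∧ψ): for every model M, world w, and ML(DD)-formulas φ,ψ, M,w ⊨ @_φψ iff φ holds in exactly one world v of M and ψ also holds in that world v. -/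
/-- MLC-formulas (modal logic with counting operators ∃_{≥n}). -/
inductive MLC : Type
  | prop : ℕ → MLC
  | neg : MLC → MLC
  | or : MLC → MLC → MLC
  | dia : MLC → MLC
  | count : ℕ → MLC → MLC

/-- Satisfaction relation for MLC: `∃_{≥n} φ` holds iff at least `n` distinct worlds
satisfy `φ`. -/
def satC (M : Model) : M.W → MLC → Prop
  | w, .prop p => M.V p w
  | w, .neg φ => ¬ satC M w φ
  | w, .or φ ψ => satC M w φ ∨ satC M w ψ
  | w, .dia φ => ∃ v, M.R w v ∧ satC M v φ
  | _, .count n φ => ∃ f : Fin n → M.W, Function.Injective f ∧ ∀ k, satC M (f k) φ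

/-- Conjunction in MLC. -/
def MLC.and (a b : MLC) : MLC := .neg (.or (.neg a) (.neg b))

lemma satC_and (M : Model) (w : M.W) (a b : MLC) :
    satC M w (a.and b) ↔ satC M w a ∧ satC M w b := by
  simp [MLC.and, satC]

lemma satC_count_one (M : Model) (w : M.W) (a : MLC) :
    satC M w (.count 1 a) ↔ ∃ v, satC M v a := by
  constructor
  · rintro ⟨f, -, hs⟩; exact ⟨f 0, hs 0⟩
  · rintro ⟨v, hv⟩
    exact ⟨fun _ => v, fun i j _ => Subsingleton.elim i j, fun _ => hv⟩

lemma satC_count_two (M : Model) (w : M.W) (a : MLC) :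
    satC M w (.count 2 a) ↔ ∃ u v, u ≠ v ∧ satC M u a ∧ satC M v a := by
  constructor
  · rintro ⟨f, hinj, hs⟩
    exact ⟨f 0, f 1, fun h => by simpa using hinj h, hs 0, hs 1⟩
  · rintro ⟨u, v, huv, hu, hv⟩
    refine ⟨fun i => if i = 0 then u else v, ?_, ?_⟩
    · intro i j h
      fin_cases i <;> fin_cases j <;> simp_all
    · intro k; fin_cases k <;> simp [hu, hv]

/-- For every ML(DD)-formula there is an equivalent MLC-formula; in particular `@_φψ` is
equivalent to `∃_{=1}φ ∧ ∃_{=1}(φ∧ψ)`: it holds at `w` iff `φ` holds in exactly one world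
and `ψ` also holds in that world. -/
theorem mldd_into_mlc :
    (∀ φ : MLDD, ∃ φ' : MLC, ∀ (M : Model) (w : M.W), sat M w φ ↔ satC M w φ') ∧
    (∀ (M : Model) (w : M.W) (φ ψ : MLDD),
      sat M w (.dd φ ψ) ↔ (∃! v : M.W, sat M v φ) ∧ (∃! v : M.W, sat M v φ ∧ sat M v ψ)) := by
  constructor
  · intro φ
    induction φ with
    | prop p => exact ⟨.prop p, fun M w => Iff.rfl⟩
    | neg φ ih =>
      obtain ⟨a, ha⟩ := ih
      exact ⟨.neg a, fun M w => by simp [sat, satC, ha]⟩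
    | or φ ψ ih1 ih2 =>
      obtain ⟨a, ha⟩ := ih1; obtain ⟨b, hb⟩ := ih2
      exact ⟨.or a b, fun M w => by simp [sat, satC, ha, hb]⟩
    | dia φ ih =>
      obtain ⟨a, ha⟩ := ih
      exact ⟨.dia a, fun M w => by simp [sat, satC, ha]⟩
    | dd φ ψ ih1 ih2 =>
      obtain ⟨a, ha⟩ := ih1; obtain ⟨b, hb⟩ := ih2
      refine ⟨(MLC.count 1 (a.and b)).and (.neg (.count 2 a)), fun M w => ?_⟩
      rw [satC_and]
      show sat M w (.dd φ ψ) ↔ _ ∧ ¬ satC M w (.count 2 a)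
      rw [satC_count_one, satC_count_two]
      constructor
      · rintro ⟨v, h1, h2, h3⟩
        refine ⟨⟨v, (satC_and M v a b).2 ⟨(ha M v).1 h1, (hb M v).1 h2⟩⟩, ?_⟩
        rintro ⟨u, u', huu', hu, hu'⟩
        rcases eq_or_ne u v with rfl | hne
        · exact h3 u' huu'.symm ((ha M u').2 hu')
        · exact h3 u hne ((ha M u).2 hu)
      · rintro ⟨⟨v, hv⟩, h2⟩
        rw [satC_and] at hv
        refine ⟨v, (ha M v).2 hv.1, (hb M v).2 hv.2, fun v' hne hv' => ?_⟩
        exact h2 ⟨v', v, hne, (ha M v').1 hv', hv.1⟩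
  · intro M w φ ψ
    constructor
    · rintro ⟨v, h1, h2, h3⟩
      refine ⟨⟨v, h1, fun u hu => by_contra fun h => h3 u h hu⟩,
        ⟨v, ⟨h1, h2⟩, fun u hu => by_contra fun h => h3 u h hu.1⟩⟩
    · rintro ⟨⟨v, hv, huniq⟩, ⟨u, ⟨hu1, hu2⟩, -⟩⟩
      have : u = v := huniq u hu1
      subst this
      exact ⟨u, hu1, hu2, fun v' h hv' => h (huniq v' hv')⟩
end

section
/- There is no ML(DD)-formula χ such that for every model M = (W,R,V) with W finite and every world w ∈ W: M,w ⊨ χ if and only if W has exactly two elements. In particular, the MLC-formula ∃_{=2}⊤ cannot be expressed in ML(DD), so MLC is not less-than-or-equally expressive than ML(DD), already over the class of finite frames. -/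
abbrev M2 : Model := ⟨Fin 2, ⟨0⟩, fun _ _ => True, fun _ _ => True⟩
abbrev M3 : Model := ⟨Fin 3, ⟨0⟩, fun _ _ => True, fun _ _ => True⟩

lemma key (φ : MLDD) : ∀ (w : Fin 2) (w' : Fin 3), sat M2 w φ ↔ sat M3 w' φ := by
  induction φ with
  | prop p => intro w w'; simp [sat, M2, M3]
  | neg φ ih => intro w w'; exact not_congr (ih w w')
  | or φ ψ ih1 ih2 => intro w w'; exact or_congr (ih1 w w') (ih2 w w')
  | dia φ ih =>
      intro w w'
      constructor
      · rintro ⟨v, -, h⟩; exact ⟨0, trivial, (ih v 0).mp h⟩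
      · rintro ⟨v, -, h⟩; exact ⟨0, trivial, (ih 0 v).mpr h⟩
  | dd φ ψ ih1 ih2 =>
      intro w w'
      constructor
      · rintro ⟨v, hφ, -, huniq⟩
        obtain ⟨u, hu⟩ := exists_ne v
        exact absurd ((ih1 u 0).mpr ((ih1 v 0).mp hφ)) (huniq u hu)
      · rintro ⟨v, hφ, -, huniq⟩
        obtain ⟨u, hu⟩ := exists_ne v
        exact absurd ((ih1 0 u).mp ((ih1 0 v).mpr hφ)) (huniq u hu)

/-- There is no ML(DD)-formula which, over finite models, holds at a world iff the domain
has exactly two elements: the MLC-formula ∃_{=2}⊤ cannot be expressed in ML(DD), already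
over the class of finite frames. -/
theorem no_mldd_formula_defines_two :
    ¬ ∃ χ : MLDD, ∀ M : Model, Finite M.W →
      ∀ w : M.W, (sat M w χ ↔ Nat.card M.W = 2) := by
  rintro ⟨χ, h⟩
  have h2 : sat M2 (0 : Fin 2) χ := (h M2 (by exact Finite.of_fintype (Fin 2)) 0).mpr (by simp [M2])
  have h3 : sat M3 (0 : Fin 3) χ := (key χ 0 0).mp h2
  have := (h M3 (by exact Finite.of_fintype (Fin 3)) 0).mp h3
  simp [M3] at this
end

section
/- For every natural number n ≥ 2, there is no ML(DD)-formula χ such that for every model M = (W,R,V) and every world w ∈ W: M,w ⊨ χ if and only if W has exactly n elements. That is, ML(DD) cannot define any class of frames with domains of a fixed cardinality greater than 1. -/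
/-- Homogeneous model on `Fin k`. -/
def homModel (k : ℕ) (hk : 0 < k) : Model :=
  { W := Fin k
    ne := ⟨⟨0, hk⟩⟩
    R := fun _ _ => True
    V := fun _ _ => True }

/-- Truth value of a formula in any homogeneous model with ≥ 2 worlds. -/
def homSat : MLDD → Prop
  | .prop _ => True
  | .neg φ => ¬ homSat φ
  | .or φ ψ => homSat φ ∨ homSat ψ
  | .dia φ => homSat φ
  | .dd _ _ => False

lemma homSat_iff (φ : MLDD) : ∀ (k : ℕ) (hk : 2 ≤ k) (w : (homModel k (by omega)).W),
    sat (homModel k (by omega)) w φ ↔ homSat φ := by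
  induction φ with
  | prop p => intro k hk w; simp [sat, homSat, homModel]
  | neg φ ih => intro k hk w; simp only [sat, homSat]; rw [ih k hk w]
  | or φ ψ ihφ ihψ => intro k hk w; simp only [sat, homSat]; rw [ihφ k hk w, ihψ k hk w]
  | dia φ ih =>
      intro k hk w
      simp only [sat, homSat]
      constructor
      · rintro ⟨v, -, hv⟩; exact (ih k hk v).1 hv
      · intro h; exact ⟨w, trivial, (ih k hk w).2 h⟩
  | dd φ ψ ihφ ihψ =>
      intro k hk w
      simp only [sat, homSat, iff_false]
      rintro ⟨v, hφ, -, huniq⟩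
      have h0 : (⟨0, by omega⟩ : Fin k) ≠ ⟨1, by omega⟩ := by simp
      have : ∃ v', v' ≠ v := by
        rcases eq_or_ne v ⟨0, by omega⟩ with h | h
        · exact ⟨⟨1, by omega⟩, h ▸ h0.symm⟩
        · exact ⟨⟨0, by omega⟩, fun e => h e.symm⟩
      obtain ⟨v', hv'⟩ := this
      exact huniq v' hv' ((ihφ k hk v').2 ((ihφ k hk v).1 hφ))

/-- For every `n ≥ 2` there is no ML(DD)-formula which holds at a world of a model iff the
domain has exactly `n` elements: ML(DD) cannot define any class of frames with domains of a
fixed cardinality greater than 1. -/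
theorem no_mldd_formula_defines_card (n : ℕ) (hn : 2 ≤ n) :
    ¬ ∃ χ : MLDD, ∀ (M : Model) (w : M.W), sat M w χ ↔ Nat.card M.W = n := by
  rintro ⟨χ, hχ⟩
  have h1 := hχ (homModel n (by omega)) ⟨0, by omega⟩
  have h2 := hχ (homModel (n+1) (by omega)) ⟨0, by omega⟩
  replace h1 := (homSat_iff χ n hn ⟨0, by omega⟩).symm.trans h1
  replace h2 := (homSat_iff χ (n+1) (by omega) ⟨0, by omega⟩).symm.trans h2
  have c1 : Nat.card (homModel n (by omega)).W = n := by simp [homModel]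
  have c2 : Nat.card (homModel (n+1) (by omega)).W = n + 1 := by simp [homModel]
  rw [c1] at h1
  rw [c2] at h2
  exact absurd (h2.mp (h1.mpr rfl)) (by omega)
end

section
/- Let N be the model whose set of worlds is {0,1}×ℤ, with accessibility relation (i,n) R (j,m) iff i < j, or i = j and n < m (i.e., two copies of (ℤ,<), the first entirely preceding the second), and valuation V(p) = {0}×ℤ for a fixed propositional variable p and V(q) = ∅ for every other propositional variable q. Then: (a) for all n,m ∈ ℤ, the worlds (0,n) and (0,m) satisfy exactly the same ML(DD)-formulas, and the worlds (1,n) and (1,m) satisfy exactly the same ML(DD)-formulas; (b) no formula of the form @_φψ is satisfied at any world of N. -/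
/-- The model `N` over two copies of (ℤ,<), the first entirely preceding the second:
worlds are `{0,1} × ℤ`, `(i,n) R (j,m)` iff `i < j`, or `i = j` and `n < m`; the fixed
propositional variable `p` (index 0) holds exactly on the first copy `{0} × ℤ`, and every
other propositional variable is everywhere false. -/
def N : Model where
  W := Fin 2 × ℤ
  ne := ⟨(0, 0)⟩
  R := fun x y => x.1 < y.1 ∨ (x.1 = y.1 ∧ x.2 < y.2)
  V := fun p w => p = 0 ∧ w.1 = 0

lemma inv : ∀ (φ : MLDD) (i : Fin 2) (n m : ℤ),
    sat N (i, n) φ → sat N (i, m) φ := by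
  intro φ
  induction φ with
  | prop p => intro i n m h; exact h
  | neg φ ih => intro i n m h hc; exact h (ih i m n hc)
  | or φ ψ ihφ ihψ =>
    intro i n m h
    rcases h with h | h
    · exact Or.inl (ihφ i n m h)
    · exact Or.inr (ihψ i n m h)
  | dia φ ih =>
    rintro i n m ⟨⟨j, k⟩, hR, hs⟩
    rcases hR with h | ⟨rfl, h⟩
    · exact ⟨(j, k), Or.inl h, hs⟩
    · exact ⟨(i, m + 1), Or.inr ⟨rfl, by omega⟩, ih i k (m + 1) hs⟩
  | dd φ ψ _ _ =>
    intro i n m h; exact h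

/-- (a) For all `n, m ∈ ℤ`, the worlds `(0,n)` and `(0,m)` of `N` satisfy exactly the same
ML(DD)-formulas, and so do `(1,n)` and `(1,m)`; (b) no formula of the form `@_φψ` is
satisfied at any world of `N`. -/
theorem two_copies_of_int :
    (∀ n m : ℤ, ∀ φ : MLDD,
      (sat N ((0 : Fin 2), n) φ ↔ sat N ((0 : Fin 2), m) φ) ∧
      (sat N ((1 : Fin 2), n) φ ↔ sat N ((1 : Fin 2), m) φ)) ∧
    (∀ (w : N.W) (φ ψ : MLDD), ¬ sat N w (.dd φ ψ)) := by
  have nodd : ∀ (w : N.W) (φ ψ : MLDD), ¬ sat N w (.dd φ ψ) := by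
    rintro w φ ψ ⟨⟨i, k⟩, hφ, _, huniq⟩
    exact huniq (i, k + 1) (by intro h; change ((i, k + 1) : Fin 2 × ℤ) = (i, k) at h; rw [Prod.mk.injEq] at h; omega) (inv φ i k (k + 1) hφ)
  refine ⟨fun n m φ => ⟨⟨inv φ 0 n m, inv φ 0 m n⟩, ⟨inv φ 1 n m, inv φ 1 m n⟩⟩, nodd⟩
end

section
/- For any ML(DD)-formula ψ, any n ≥ 1, any model M based on the integer frame (ℤ,<), and any w ∈ ℤ: there are at least n distinct integers v with M,v ⊨ ψ if and only if M,w ⊨ ◇ψ_n ∨ @_{(ψ_n ∧ ¬◇ψ_n)}⊤, where ψ_n = ψ ∧ ◇(ψ ∧ ◇(ψ ∧ ... )) with n occurrences of ψ. That is, over (ℤ,<) the counting operator ∃_{≥n} is expressible in ML(DD). -/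
/-- Conjunction, as the usual abbreviation. -/
def mand (φ ψ : MLDD) : MLDD := .neg (.or (.neg φ) (.neg ψ))

/-- ⊤, as a tautology (p ∨ ¬p). -/
def mtop : MLDD := .or (.prop 0) (.neg (.prop 0))

/-- `psiIter ψ k` is the formula `ψ_{k+1}`, where `ψ_1 = ψ` and `ψ_{k+1} = ψ ∧ ◇ψ_k`. -/
def psiIter (ψ : MLDD) : ℕ → MLDD
  | 0 => ψ
  | k + 1 => mand ψ (.dia (psiIter ψ k))

/-- The model based on the integer frame (ℤ,<) with valuation `V`. -/
def zModel (V : ℕ → ℤ → Prop) : Model where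
  W := ℤ
  ne := ⟨0⟩
  R := fun w v => w < v
  V := V

lemma sat_neg {M : Model} {w : M.W} {φ : MLDD} : sat M w (.neg φ) ↔ ¬ sat M w φ := Iff.rfl

lemma sat_or {M : Model} {w : M.W} {φ χ : MLDD} :
    sat M w (.or φ χ) ↔ sat M w φ ∨ sat M w χ := Iff.rfl

lemma sat_dia {M : Model} {w : M.W} {φ : MLDD} :
    sat M w (.dia φ) ↔ ∃ v, M.R w v ∧ sat M v φ := Iff.rfl

lemma sat_dd {M : Model} {w : M.W} {φ χ : MLDD} :
    sat M w (.dd φ χ) ↔ ∃ v, sat M v φ ∧ sat M v χ ∧ ∀ v', v' ≠ v → ¬ sat M v' φ := Iff.rfl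

lemma sat_mand {M : Model} {w : M.W} {φ χ : MLDD} :
    sat M w (mand φ χ) ↔ sat M w φ ∧ sat M w χ := by
  rw [mand, sat_neg, sat_or, sat_neg, sat_neg]; tauto

lemma sat_mtop {M : Model} {w : M.W} : sat M w mtop := by
  rw [mtop, sat_or, sat_neg]; exact em _

lemma zR {V : ℕ → ℤ → Prop} {w v : ℤ} : (zModel V).R w v ↔ w < v := Iff.rfl

lemma sat_psiIter_iff (ψ : MLDD) (V : ℕ → ℤ → Prop) (k : ℕ) (v : ℤ) :
    sat (zModel V) v (psiIter ψ k) ↔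
      sat (zModel V) v ψ ∧
        ∃ s : Finset ℤ, s.card = k ∧ ∀ x ∈ s, v < x ∧ sat (zModel V) x ψ := by
  induction k generalizing v with
  | zero =>
    simp only [psiIter, Finset.card_eq_zero]
    constructor
    · intro h; exact ⟨h, ∅, rfl, by simp⟩
    · rintro ⟨h, -⟩; exact h
  | succ k ih =>
    rw [psiIter]; erw [sat_mand, sat_dia]
    constructor
    · rintro ⟨h1, u, huv, hu⟩
      erw [zR] at huv
      erw [ih] at hu
      obtain ⟨hψu, s, hcard, hs⟩ := hu
      refine ⟨h1, insert u s, ?_, ?_⟩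
      · erw [Finset.card_insert_of_notMem (fun h => Int.lt_irrefl u (hs u h).1), hcard]
      · intro x hx
        rcases Finset.mem_insert.1 hx with rfl | hx
        · exact ⟨huv, hψu⟩
        · exact ⟨huv.trans (hs x hx).1, (hs x hx).2⟩
    · rintro ⟨h1, s, hcard, hs⟩
      have hne : s.Nonempty := Finset.card_pos.1 (by omega)
      refine ⟨h1, s.min' hne, zR.2 (hs _ (s.min'_mem hne)).1, ?_⟩
      rw [ih]
      refine ⟨(hs _ (s.min'_mem hne)).2, s.erase (s.min' hne), ?_, ?_⟩
      · rw [Finset.card_erase_of_mem (s.min'_mem hne), hcard]; omega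
      · intro x hx
        have hxs := Finset.mem_of_mem_erase hx
        exact ⟨lt_of_le_of_ne (s.min'_le x hxs) (Ne.symm (Finset.ne_of_mem_erase hx)),
          (hs x hxs).2⟩


lemma exists_inj_of_sat_psiIter (ψ : MLDD) (V : ℕ → ℤ → Prop) (k : ℕ) (v : ℤ)
    (hv : sat (zModel V) v (psiIter ψ k)) :
    ∃ f : Fin (k + 1) → ℤ, Function.Injective f ∧ ∀ i : Fin (k + 1), sat (zModel V) (f i) ψ := by
  rw [sat_psiIter_iff] at hv
  obtain ⟨hψv, s, hcard, hs⟩ := hv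
  have hvs : v ∉ s := fun h => lt_irrefl v (hs v h).1
  have hcard' : (insert v s).card = k + 1 := by
    rw [Finset.card_insert_of_notMem hvs, hcard]
  refine ⟨fun i => ((insert v s).equivFin.symm (Fin.cast hcard'.symm i) : ℤ), ?_, ?_⟩
  · intro i j hij
    have := (insert v s).equivFin.symm.injective (Subtype.ext hij)
    simpa [Fin.ext_iff] using congrArg Fin.val this
  · intro i
    have hall : ∀ x ∈ insert v s, sat (zModel V) x ψ := by
      intro x hx
      rcases Finset.mem_insert.1 hx with rfl | hx
      · exact hψv
      · exact (hs x hx).2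
    exact hall _ ((insert v s).equivFin.symm (Fin.cast hcard'.symm i)).2

/-- Over the integer frame (ℤ,<), for any `n ≥ 1`: there are at least `n` distinct integers
satisfying `ψ` iff `◇ψ_n ∨ @_{(ψ_n ∧ ¬◇ψ_n)}⊤` holds at `w` — i.e. over (ℤ,<) the counting
operator `∃_{≥n}` is expressible in ML(DD). -/
theorem count_expressible_over_int (ψ : MLDD) (n : ℕ) (hn : 1 ≤ n)
    (V : ℕ → ℤ → Prop) (w : ℤ) :
    (∃ f : Fin n → ℤ, Function.Injective f ∧ ∀ k : Fin n, sat (zModel V) (f k) ψ) ↔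
      sat (zModel V) w
        (.or (.dia (psiIter ψ (n - 1)))
          (.dd (mand (psiIter ψ (n - 1)) (.neg (.dia (psiIter ψ (n - 1))))) mtop)) := by
  obtain ⟨k, rfl⟩ : ∃ k, n = k + 1 := ⟨n - 1, by omega⟩
  simp only [Nat.add_sub_cancel]
  erw [sat_or, sat_dia, sat_dd]
  constructor
  · rintro ⟨f, hinj, hf⟩
    -- there is a finset of k+1 witnesses
    obtain ⟨t, hcard, ht⟩ : ∃ t : Finset ℤ, t.card = k + 1 ∧ ∀ x ∈ t, sat (zModel V) x ψ := by
      refine ⟨Finset.image f Finset.univ, ?_, ?_⟩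
      · rw [Finset.card_image_of_injective _ hinj, Finset.card_univ, Fintype.card_fin]
      · intro x hx
        obtain ⟨i, -, rfl⟩ := Finset.mem_image.1 hx
        exact hf i
    have hne : t.Nonempty := Finset.card_pos.1 (by omega)
    have hm : sat (zModel V) (t.min' hne) (psiIter ψ k) := by
      rw [sat_psiIter_iff]
      refine ⟨ht _ (t.min'_mem hne), t.erase (t.min' hne), ?_, ?_⟩
      · rw [Finset.card_erase_of_mem (t.min'_mem hne), hcard]; omega
      · intro x hx
        have hxs := Finset.mem_of_mem_erase hx
        exact ⟨lt_of_le_of_ne (t.min'_le x hxs) (Ne.symm (Finset.ne_of_mem_erase hx)),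
          ht x hxs⟩
    by_cases hgt : ∃ v, (zModel V).R w v ∧ sat (zModel V) v (psiIter ψ k)
    · exact Or.inl hgt
    · right
      push_neg at hgt
      have hbdd : ∀ z : ℤ, sat (zModel V) z (psiIter ψ k) → z ≤ w := by
        intro z hz
        by_contra h
        exact hgt z (zR.2 (by omega)) hz
      obtain ⟨m, hmP, hmax⟩ := Int.exists_greatest_of_bdd ⟨w, hbdd⟩ ⟨t.min' hne, hm⟩
      refine ⟨m, ?_, sat_mtop, ?_⟩
      · erw [sat_mand, sat_neg, sat_dia]
        refine ⟨hmP, ?_⟩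
        rintro ⟨u, hmu, hu⟩
        exact absurd (hmax u hu) (not_le.2 (zR.1 hmu))
      · intro v' hv' hsatv'
        erw [sat_mand, sat_neg, sat_dia] at hsatv'
        obtain ⟨hP', hnd⟩ := hsatv'
        have : @LT.lt ℤ _ v' m := lt_of_le_of_ne (hmax v' hP') hv'
        exact hnd ⟨m, zR.2 this, hmP⟩
  · rintro (⟨v, -, hv⟩ | ⟨v, hv, -, -⟩)
    · exact exists_inj_of_sat_psiIter ψ V k v hv
    · erw [sat_mand] at hv
      exact exists_inj_of_sat_psiIter ψ V k v hv.1
end
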